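/- arXiv:1602.04391 — 3 statements merged into one kernel-verified Lean document; each statement's English description precedes it below -/
import Mathlib

section
/- Let J, K ≥ 1 and let K₁ be the (2JK + 2K + 2J) × JK matrix obtained by stacking the row blocks I_{JK}, −I_{JK}, B, −B, C, −C. Then the number of nonzero entries of K₁K₁ᵀ equals 4(J + K + 7JK). -/
open Matrix
open scoped Classical

/-- `B` is the `K × JK` matrix `[I_K I_K ⋯ I_K]` of `J` horizontally
concatenated `K × K` identity blocks: entry `(k, (j, k'))` is `δ_{k k'}`. -/
def Bmat (J K : ℕ) : Matrix (Fin K) (Fin J × Fin K) ℝ :=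
  Matrix.of fun k jk => if jk.2 = k then (1 : ℝ) else 0

/-- `C = I_J ⊗ 1_Kᵀ` is the `J × JK` matrix with entry `(j, (j', k))` equal
to `δ_{j j'}`. -/
def Cmat (J K : ℕ) : Matrix (Fin J) (Fin J × Fin K) ℝ :=
  Matrix.of fun j jk => if jk.1 = j then (1 : ℝ) else 0

/-- Row index type for the stacked matrix `K₁`:
rows of `I_{JK}`, `−I_{JK}`, `B`, `−B`, `C`, `−C`. -/
abbrev RowIdx (J K : ℕ) :=
  (Fin J × Fin K) ⊕ (Fin J × Fin K) ⊕ Fin K ⊕ Fin K ⊕ Fin J ⊕ Fin J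

/-- The `(2JK + 2K + 2J) × JK` matrix obtained by stacking the row blocks
`I_{JK}`, `−I_{JK}`, `B`, `−B`, `C`, `−C`. -/
def Kone (J K : ℕ) : Matrix (RowIdx J K) (Fin J × Fin K) ℝ :=
  Matrix.of
    (Sum.elim (fun jk => (1 : Matrix (Fin J × Fin K) (Fin J × Fin K) ℝ) jk)
      (Sum.elim (fun jk => (-(1 : Matrix (Fin J × Fin K) (Fin J × Fin K) ℝ)) jk)
        (Sum.elim (Bmat J K)
          (Sum.elim (-(Bmat J K))
            (Sum.elim (Cmat J K) (-(Cmat J K)))))))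

/-- `card X` = number of nonzero entries of the matrix `X`. -/
noncomputable def matCard {m n : Type*} [Fintype m] [Fintype n]
    (M : Matrix m n ℝ) : ℕ :=
  (Finset.univ.filter fun p : m × n => M p.1 p.2 ≠ 0).card

lemma ipEE {J K : ℕ} (a b : Fin J × Fin K) :
    ∑ x : Fin J × Fin K, (if a = x then (1:ℝ) else 0) * (if b = x then (1:ℝ) else 0)
      = if a = b then 1 else 0 := by
  simp [ite_mul, Finset.sum_ite_eq]

lemma ipEB {J K : ℕ} (a : Fin J × Fin K) (k : Fin K) :
    ∑ x : Fin J × Fin K, (if a = x then (1:ℝ) else 0) * (if x.2 = k then (1:ℝ) else 0)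
      = if a.2 = k then 1 else 0 := by
  rw [Finset.sum_congr rfl (fun x _ => show _ = if a = x then (if x.2 = k then (1:ℝ) else 0) else 0 by split_ifs <;> simp_all)]
  simp [Finset.sum_ite_eq]

lemma ipBE {J K : ℕ} (a : Fin J × Fin K) (k : Fin K) :
    ∑ x : Fin J × Fin K, (if x.2 = k then (1:ℝ) else 0) * (if a = x then (1:ℝ) else 0)
      = if a.2 = k then 1 else 0 := by
  rw [Finset.sum_congr rfl (fun x _ => show _ = if a = x then (if x.2 = k then (1:ℝ) else 0) else 0 by split_ifs <;> simp_all)]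
  simp [Finset.sum_ite_eq]

lemma ipEC {J K : ℕ} (a : Fin J × Fin K) (j : Fin J) :
    ∑ x : Fin J × Fin K, (if a = x then (1:ℝ) else 0) * (if x.1 = j then (1:ℝ) else 0)
      = if a.1 = j then 1 else 0 := by
  rw [Finset.sum_congr rfl (fun x _ => show _ = if a = x then (if x.1 = j then (1:ℝ) else 0) else 0 by split_ifs <;> simp_all)]
  simp [Finset.sum_ite_eq]

lemma ipCE {J K : ℕ} (a : Fin J × Fin K) (j : Fin J) :
    ∑ x : Fin J × Fin K, (if x.1 = j then (1:ℝ) else 0) * (if a = x then (1:ℝ) else 0)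
      = if a.1 = j then 1 else 0 := by
  rw [Finset.sum_congr rfl (fun x _ => show _ = if a = x then (if x.1 = j then (1:ℝ) else 0) else 0 by split_ifs <;> simp_all)]
  simp [Finset.sum_ite_eq]

lemma ipBB {J K : ℕ} (k k' : Fin K) :
    ∑ x : Fin J × Fin K, (if x.2 = k then (1:ℝ) else 0) * (if x.2 = k' then (1:ℝ) else 0)
      = if k = k' then (J:ℝ) else 0 := by
  simp only [Fintype.sum_prod_type]
  rw [Finset.sum_congr rfl (fun j _ => Finset.sum_congr rfl (fun x _ => show _ = if x = k then (if k = k' then (1:ℝ) else 0) else 0 by split_ifs <;> simp_all))]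
  simp [Finset.sum_ite_eq']

lemma ipBC {J K : ℕ} (k : Fin K) (j : Fin J) :
    ∑ x : Fin J × Fin K, (if x.2 = k then (1:ℝ) else 0) * (if x.1 = j then (1:ℝ) else 0)
      = 1 := by
  simp [Fintype.sum_prod_type, ite_mul, Finset.sum_ite_eq, mul_ite]

lemma ipCB {J K : ℕ} (k : Fin K) (j : Fin J) :
    ∑ x : Fin J × Fin K, (if x.1 = j then (1:ℝ) else 0) * (if x.2 = k then (1:ℝ) else 0)
      = 1 := by
  simp [Fintype.sum_prod_type, ite_mul, Finset.sum_ite_eq, mul_ite]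

lemma ipCC {J K : ℕ} (j j' : Fin J) :
    ∑ x : Fin J × Fin K, (if x.1 = j then (1:ℝ) else 0) * (if x.1 = j' then (1:ℝ) else 0)
      = if j = j' then (K:ℝ) else 0 := by
  simp only [Fintype.sum_prod_type]
  rw [Finset.sum_congr rfl (fun x _ => show _ = if x = j then ∑ _y : Fin K, (if j = j' then (1:ℝ) else 0) else 0 from ?_)]
  · simp [Finset.sum_ite_eq']
  · split_ifs <;> simp_all

lemma cardSnd {J K : ℕ} (k : Fin K) :
    (Finset.univ.filter (fun x : Fin J × Fin K => x.2 = k)).card = J := by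
  rw [show (Finset.univ.filter (fun x : Fin J × Fin K => x.2 = k))
      = Finset.univ ×ˢ {k} by
        ext x; simp [Finset.mem_product, Prod.ext_iff]; aesop]
  simp

lemma cardFst {J K : ℕ} (j : Fin J) :
    (Finset.univ.filter (fun x : Fin J × Fin K => x.1 = j)).card = K := by
  rw [show (Finset.univ.filter (fun x : Fin J × Fin K => x.1 = j))
      = ({j} : Finset (Fin J)) ×ˢ Finset.univ by
        ext x; simp [Finset.mem_product, Prod.ext_iff]; aesop]
  simp

lemma Kone_a {J K : ℕ} (x y : Fin J × Fin K) :
    Kone J K (Sum.inl x) y = if x = y then (1:ℝ) else 0 := rfl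

lemma Kone_b {J K : ℕ} (x y : Fin J × Fin K) :
    Kone J K (Sum.inr (Sum.inl x)) y = -(if x = y then (1:ℝ) else 0) := rfl

lemma Kone_c {J K : ℕ} (x : Fin K) (y : Fin J × Fin K) :
    Kone J K (Sum.inr (Sum.inr (Sum.inl x))) y = if y.2 = x then (1:ℝ) else 0 := rfl

lemma Kone_d {J K : ℕ} (x : Fin K) (y : Fin J × Fin K) :
    Kone J K (Sum.inr (Sum.inr (Sum.inr (Sum.inl x)))) y = -(if y.2 = x then (1:ℝ) else 0) := rfl

lemma Kone_e {J K : ℕ} (x : Fin J) (y : Fin J × Fin K) :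
    Kone J K (Sum.inr (Sum.inr (Sum.inr (Sum.inr (Sum.inl x))))) y = if y.1 = x then (1:ℝ) else 0 := rfl

lemma Kone_f {J K : ℕ} (x : Fin J) (y : Fin J × Fin K) :
    Kone J K (Sum.inr (Sum.inr (Sum.inr (Sum.inr (Sum.inr x))))) y = -(if y.1 = x then (1:ℝ) else 0) := rfl

theorem stmt2 (J K : ℕ) (hJ : 1 ≤ J) (hK : 1 ≤ K) :
    matCard (Kone J K * (Kone J K)ᵀ) = 4 * (J + K + 7 * J * K) := by
  classical
  have hJ0 : (J:ℝ) ≠ 0 := Nat.cast_ne_zero.mpr (by omega)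
  have hK0 : (K:ℝ) ≠ 0 := Nat.cast_ne_zero.mpr (by omega)
  rw [matCard, Finset.card_filter]
  rw [Fintype.sum_prod_type]
  simp only [Fintype.sum_sum_type, Kone_a, Kone_b, Kone_c, Kone_d, Kone_e, Kone_f, mul_apply, transpose_apply, of_apply,
    Sum.elim_inl, Sum.elim_inr, Matrix.neg_apply, Bmat, Cmat, one_apply,
    neg_mul, mul_neg, neg_neg, Finset.sum_neg_distrib, neg_eq_zero]
  simp only [ipEE, ipEB, ipBE, ipEC, ipCE, ipBB, ipBC, ipCB, ipCC, neg_ne_zero,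
    ne_eq, ite_eq_right_iff, one_ne_zero, imp_false, not_not, hJ0, hK0, not_forall,
    exists_prop, and_true]
  simp only [Finset.sum_ite_eq, Finset.sum_ite_eq', Finset.mem_univ, if_true,
    Finset.sum_const, Finset.card_univ, Fintype.card_prod, Fintype.card_fin, smul_eq_mul,
    mul_one, Finset.sum_boole]
  push_cast
  ring_nf
  simp only [cardSnd, cardFst, not_false_iff, if_true, Finset.sum_const,
    Finset.card_univ, Fintype.card_fin, smul_eq_mul]
  ring
end

section
/- Let s ≥ 1, B an s×s real positive definite matrix, b ∈ ℝ^s, and b̃ > 0. For any m ≤ s and any points x₁, …, x_m ∈ ∂S, the polyhedron T = ⋂_{j=1}^m H(x_j) = {x ∈ ℝ^s : (x−b)ᵀB(x_j−b) ≤ b̃ for j = 1,…,m} is unbounded; in particular, sup_{t ∈ T} dist(t, S) = ∞, so T is not a bounded cover of S. Hence at least s + 1 tangent points are needed to obtain a bounded cover of S. -/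
open Matrix


-- lower bound for posdef quadratic form
lemma quad_lb {s : ℕ} (hs : 1 ≤ s) (B : Matrix (Fin s) (Fin s) ℝ) (hB : B.PosDef) :
    ∃ c > 0, ∀ v : EuclideanSpace ℝ (Fin s), c * ‖v‖ ^ 2 ≤ v ⬝ᵥ B.mulVec v := by
  set f : EuclideanSpace ℝ (Fin s) → ℝ := fun v => v ⬝ᵥ B.mulVec v with hf
  have hcont : Continuous f := by
    have : f = fun v : EuclideanSpace ℝ (Fin s) =>
        ∑ i, (EuclideanSpace.proj i) v * ∑ j, B i j * (EuclideanSpace.proj j) v := rfl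
    rw [this]
    exact continuous_finset_sum _ fun i _ =>
      ((EuclideanSpace.proj i).continuous).mul
        (continuous_finset_sum _ fun j _ =>
          continuous_const.mul (EuclideanSpace.proj j).continuous)
  haveI : Nontrivial (EuclideanSpace ℝ (Fin s)) := by
    refine ⟨0, EuclideanSpace.single ⟨0, hs⟩ (1 : ℝ), fun h => ?_⟩
    have := congrArg norm h
    simp [EuclideanSpace.norm_single] at this
  have hsne : (Metric.sphere (0 : EuclideanSpace ℝ (Fin s)) 1).Nonempty :=
    NormedSpace.sphere_nonempty.mpr zero_le_one
  obtain ⟨v0, hv0mem, hmin⟩ :=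
    (isCompact_sphere (0 : EuclideanSpace ℝ (Fin s)) 1).exists_isMinOn hsne hcont.continuousOn
  have hv0norm : ‖v0‖ = 1 := mem_sphere_zero_iff_norm.mp hv0mem
  have hv0ne : v0 ≠ 0 := by intro h; rw [h] at hv0norm; simp at hv0norm
  have hc : 0 < f v0 := by have := hB.dotProduct_mulVec_pos (x := v0.ofLp) (by simpa using hv0ne); simpa [f] using this
  refine ⟨f v0, hc, fun v => ?_⟩
  rcases eq_or_ne v 0 with rfl | hv
  · simp [f]
  · have hnv : 0 < ‖v‖ := norm_pos_iff.mpr hv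
    have hmem : (‖v‖⁻¹ • v : EuclideanSpace ℝ (Fin s)) ∈ Metric.sphere (0:EuclideanSpace ℝ (Fin s)) 1 := by
      simp [norm_smul, abs_of_pos (inv_pos.mpr hnv), inv_mul_cancel₀ hnv.ne']
    have hle := hmin hmem
    have hscale : f (‖v‖⁻¹ • v) = ‖v‖⁻¹ * (‖v‖⁻¹ * f v) := by
      show ((‖v‖⁻¹ • v) ⬝ᵥ B.mulVec (‖v‖⁻¹ • v)) = _
      rw [Matrix.mulVec_smul, WithLp.ofLp_smul, smul_dotProduct, dotProduct_smul]
      simp only [smul_eq_mul, f]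
    have : f v0 ≤ ‖v‖⁻¹ * (‖v‖⁻¹ * f v) := by
      simpa [hscale] using hle
    have h2 : f v0 * ‖v‖ ^ 2 ≤ f v := by
      have := mul_le_mul_of_nonneg_right this (by positivity : (0:ℝ) ≤ ‖v‖ ^ 2)
      calc f v0 * ‖v‖ ^ 2 ≤ ‖v‖⁻¹ * (‖v‖⁻¹ * f v) * ‖v‖ ^ 2 := this
        _ = f v := by
            field_simp
    exact h2
lemma exists_dir {s m : ℕ} (hs : 1 ≤ s) (hm : m ≤ s)
    (w : Fin m → (Fin s → ℝ)) :
    ∃ v : EuclideanSpace ℝ (Fin s), v ≠ 0 ∧ ∀ j, (v : Fin s → ℝ) ⬝ᵥ w j ≤ 0 := by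
  let L : (EuclideanSpace ℝ (Fin s)) →ₗ[ℝ] (Fin m → ℝ) :=
    { toFun := fun v j => (v : Fin s → ℝ) ⬝ᵥ w j
      map_add' := fun x y => funext fun j => add_dotProduct x y (w j)
      map_smul' := fun a x => funext fun j => smul_dotProduct a x (w j) }
  by_cases hinj : Function.Injective L
  · have hle : s ≤ m := by
      have := LinearMap.finrank_le_finrank_of_injective hinj
      simpa [finrank_euclideanSpace_fin] using this
    have heq : m = s := le_antisymm hm hle
    have hfr : Module.finrank ℝ (EuclideanSpace ℝ (Fin s)) = Module.finrank ℝ (Fin m → ℝ) := by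
      simp [finrank_euclideanSpace_fin, heq]
    have hsurj : Function.Surjective L :=
      (LinearMap.injective_iff_surjective_of_finrank_eq_finrank hfr).mp hinj
    obtain ⟨v, hv⟩ := hsurj (fun _ => (-1 : ℝ))
    refine ⟨v, ?_, fun j => ?_⟩
    · intro h
      rw [h] at hv
      have : (0 : Fin m → ℝ) = fun _ => (-1 : ℝ) := by simpa using hv
      have := congrFun this ⟨0, hle.trans_lt' (by omega)⟩
      norm_num at this
    · have : L v j = -1 := congrFun hv j
      simp only [L, LinearMap.coe_mk, AddHom.coe_mk] at this
      rw [this]; norm_num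
  · rw [← LinearMap.ker_eq_bot] at hinj
    obtain ⟨v, hvmem, hvne⟩ := (Submodule.ne_bot_iff _).mp hinj
    refine ⟨v, hvne, fun j => ?_⟩
    have : L v = 0 := hvmem
    have := congrFun this j
    simp only [L, LinearMap.coe_mk, AddHom.coe_mk, Pi.zero_apply] at this
    rw [this]

/-- For any `m ≤ s` tangent points `x₁, …, x_m ∈ ∂S` on the boundary of the
ellipsoid `S = {x : (x−b)ᵀB(x−b) ≤ b̃}` (with `B` positive definite), the
polyhedron `T = ⋂_{j} H(x_j)` cut out by the corresponding tangent
half-spaces is unbounded, and `sup_{t ∈ T} dist(t, S) = ∞` (i.e. the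
Euclidean distances from points of `T` to `S` are unbounded), so `T` is not
a bounded cover of `S`; hence at least `s + 1` tangent points are needed for
a bounded cover. -/
theorem stmt9 (s m : ℕ) (hs : 1 ≤ s) (hm : m ≤ s)
    (B : Matrix (Fin s) (Fin s) ℝ) (hB : B.PosDef)
    (b : EuclideanSpace ℝ (Fin s)) (btil : ℝ) (hbtil : 0 < btil)
    (pts : Fin m → EuclideanSpace ℝ (Fin s))
    (hpts : ∀ j, ((pts j - b : EuclideanSpace ℝ (Fin s))) ⬝ᵥ
      B.mulVec (pts j - b : EuclideanSpace ℝ (Fin s)) = btil)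
    (S T : Set (EuclideanSpace ℝ (Fin s)))
    (hS : S = {x : EuclideanSpace ℝ (Fin s) |
      ((x - b : EuclideanSpace ℝ (Fin s))) ⬝ᵥ
        B.mulVec (x - b : EuclideanSpace ℝ (Fin s)) ≤ btil})
    (hT : T = {x : EuclideanSpace ℝ (Fin s) | ∀ j,
      ((x - b : EuclideanSpace ℝ (Fin s))) ⬝ᵥ
        B.mulVec (pts j - b : EuclideanSpace ℝ (Fin s)) ≤ btil}) :
    ¬ Bornology.IsBounded T ∧ ∀ M : ℝ, ∃ t ∈ T, M < Metric.infDist t S := by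
  obtain ⟨c, hc, hquad⟩ := quad_lb hs B hB
  set R : ℝ := Real.sqrt (btil / c) with hR
  have hR0 : 0 ≤ R := Real.sqrt_nonneg _
  -- every point of S is within R of b
  have hSR : ∀ x ∈ S, dist x b ≤ R := by
    intro x hx
    rw [hS] at hx
    have h1 : c * ‖(x - b : EuclideanSpace ℝ (Fin s))‖ ^ 2 ≤ btil :=
      (hquad _).trans hx
    have h2 : ‖(x - b : EuclideanSpace ℝ (Fin s))‖ ^ 2 ≤ btil / c := by
      rw [le_div_iff₀ hc]; linarith [h1]
    have h3 : ‖(x - b : EuclideanSpace ℝ (Fin s))‖ ≤ R := by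
      rw [hR]
      exact (Real.le_sqrt (norm_nonneg _) (by positivity)).mpr h2
    rwa [dist_eq_norm]
  have hbS : b ∈ S := by
    rw [hS]
    simp [Matrix.mulVec_zero, hbtil.le]
  -- direction
  obtain ⟨v, hvne, hvdir⟩ := exists_dir hs hm
    (fun j => (B.mulVec (pts j - b : EuclideanSpace ℝ (Fin s))))
  have hnv : 0 < ‖v‖ := norm_pos_iff.mpr hvne
  -- key: for every M, a far-away point of T
  have key : ∀ M : ℝ, ∃ t ∈ T, M < Metric.infDist t S := by
    intro M
    set k : ℝ := max 1 ((M + R + 1) / ‖v‖) with hk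
    have hk1 : (1 : ℝ) ≤ k := le_max_left _ _
    have hk0 : 0 ≤ k := by linarith
    have hkv : M + R + 1 ≤ k * ‖v‖ := by
      calc M + R + 1 = ((M + R + 1) / ‖v‖) * ‖v‖ := by field_simp
        _ ≤ k * ‖v‖ := mul_le_mul_of_nonneg_right (le_max_right _ _) (norm_nonneg _)
    refine ⟨b + k • v, ?_, ?_⟩
    · rw [hT]
      intro j
      have : ((b + k • v - b : EuclideanSpace ℝ (Fin s))) ⬝ᵥ
          B.mulVec (pts j - b : EuclideanSpace ℝ (Fin s))
          = k * ((v : Fin s → ℝ) ⬝ᵥ B.mulVec (pts j - b : EuclideanSpace ℝ (Fin s))) := by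
        have hsub : (b + k • v - b : EuclideanSpace ℝ (Fin s)) = k • v := by
          abel
        rw [hsub]
        exact smul_dotProduct k v _
      refine le_trans ?_ hbtil.le
      rw [this]
      exact mul_nonpos_iff.mpr (Or.inl ⟨hk0, hvdir j⟩)
    · -- distance bound
      have hdistb : dist (b + k • v) b = k * ‖v‖ := by
        rw [dist_eq_norm]
        simp [norm_smul, abs_of_nonneg hk0]
      have hlow : ∀ y ∈ S, M + 1 ≤ dist (b + k • v) y := by
        intro y hy
        have := hSR y hy
        have htri : dist (b + k • v) b ≤ dist (b + k • v) y + dist y b :=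
          dist_triangle _ _ _
        rw [hdistb] at htri
        linarith [hkv]
      have hnotlt : ¬ Metric.infDist (b + k • v) S < M + 1 := by
        rw [Metric.infDist_lt_iff ⟨b, hbS⟩]
        push_neg
        exact hlow
      have := not_lt.mp hnotlt
      linarith
  refine ⟨?_, key⟩
  intro hbd
  obtain ⟨C, hC⟩ := isBounded_iff_forall_norm_le.mp hbd
  obtain ⟨t, htT, hMt⟩ := key (C + ‖b‖)
  have h1 : Metric.infDist t S ≤ dist t b := Metric.infDist_le_dist_of_mem hbS
  have h2 : dist t b ≤ ‖t‖ + ‖b‖ := by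
    rw [dist_eq_norm]
    exact (norm_sub_le _ _)
  have h3 : ‖t‖ ≤ C := hC t htT
  linarith
end

section
/- Let s ≥ 1, B an s×s real positive definite matrix, b ∈ ℝ^s, and b̃ > 0. Then there exist s + 1 points x₁, …, x_{s+1} ∈ ∂S such that the polytope T = ⋂_{j=1}^{s+1} H(x_j) = {x ∈ ℝ^s : (x−b)ᵀB(x_j−b) ≤ b̃ for j = 1,…,s+1} is a bounded set (hence a bounded cover of S). -/
open Matrix

section aux
variable {s : ℕ} {B : Matrix (Fin s) (Fin s) ℝ}

lemma symdot (hB : B.PosDef) (v w : Fin s → ℝ) :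
    v ⬝ᵥ B *ᵥ w = w ⬝ᵥ B *ᵥ v := by
  have hBt : Bᵀ = B := by
    have := hB.1
    rw [← Matrix.conjTranspose_eq_transpose_of_trivial]; exact this
  rw [dotProduct_mulVec, ← Matrix.vecMul_transpose, hBt, dotProduct_comm]

lemma posdot (hB : B.PosDef) (v : Fin s → ℝ) : 0 ≤ v ⬝ᵥ B *ᵥ v := by
  simpa using hB.posSemidef.dotProduct_mulVec_nonneg v

lemma cs (hB : B.PosDef) (y p : Fin s → ℝ) (hp : 0 < p ⬝ᵥ B *ᵥ p) :
    (y ⬝ᵥ B *ᵥ p) ^ 2 ≤ (y ⬝ᵥ B *ᵥ y) * (p ⬝ᵥ B *ᵥ p) := by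
  set t : ℝ := p ⬝ᵥ B *ᵥ p with ht
  set a : ℝ := y ⬝ᵥ B *ᵥ p with ha
  have h0 := posdot hB (t • y - a • p)
  have hsym := symdot hB p y
  have hexp : (t • y - a • p) ⬝ᵥ B *ᵥ (t • y - a • p)
      = t^2 * (y ⬝ᵥ B *ᵥ y) - 2 * t * a * (y ⬝ᵥ B *ᵥ p) + a^2 * t := by
    simp only [Matrix.mulVec_sub, Matrix.mulVec_smul, sub_dotProduct,
      dotProduct_sub, smul_dotProduct, dotProduct_smul,
      smul_eq_mul, ← ht, ← ha]
    linear_combination (-(t * a)) * hsym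
  rw [hexp] at h0
  nlinarith [hp, h0]

end aux

/-- There exist `s + 1` points on the boundary of the ellipsoid
`S = {x : (x−b)ᵀB(x−b) ≤ b̃}` (with `B` positive definite) such that the
polytope `T` cut out by the corresponding tangent half-spaces contains `S`
and is bounded — hence it is a bounded cover of `S`. -/
theorem stmt10 (s : ℕ) (hs : 1 ≤ s)
    (B : Matrix (Fin s) (Fin s) ℝ) (hB : B.PosDef)
    (b : EuclideanSpace ℝ (Fin s)) (btil : ℝ) (hbtil : 0 < btil) :
    ∃ pts : Fin (s + 1) → EuclideanSpace ℝ (Fin s),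
      (∀ j, ((pts j - b : EuclideanSpace ℝ (Fin s))) ⬝ᵥ
        B.mulVec (pts j - b : EuclideanSpace ℝ (Fin s)) = btil) ∧
      {x : EuclideanSpace ℝ (Fin s) |
          ((x - b : EuclideanSpace ℝ (Fin s))) ⬝ᵥ
            B.mulVec (x - b : EuclideanSpace ℝ (Fin s)) ≤ btil} ⊆
        {x : EuclideanSpace ℝ (Fin s) | ∀ j,
          ((x - b : EuclideanSpace ℝ (Fin s))) ⬝ᵥ
            B.mulVec (pts j - b : EuclideanSpace ℝ (Fin s)) ≤ btil} ∧
      Bornology.IsBounded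
        {x : EuclideanSpace ℝ (Fin s) | ∀ j,
          ((x - b : EuclideanSpace ℝ (Fin s))) ⬝ᵥ
            B.mulVec (pts j - b : EuclideanSpace ℝ (Fin s)) ≤ btil} := by
  classical
  set u : Fin (s+1) → (Fin s → ℝ) := fun j =>
    if h : (j : ℕ) < s then Pi.single (⟨j, h⟩ : Fin s) 1 else fun _ => -1 with hu
  have hune : ∀ j, u j ≠ 0 := by
    intro j
    by_cases h : (j : ℕ) < s
    · simp only [hu, dif_pos h]
      intro hc
      have := congrFun hc ⟨j, h⟩
      simp at this
    · simp only [hu, dif_neg h]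
      intro hc
      have := congrFun hc ⟨0, hs⟩
      norm_num at this
  set Q : Fin (s+1) → ℝ := fun j => u j ⬝ᵥ B *ᵥ u j with hQ
  have hQpos : ∀ j, 0 < Q j := fun j => by
    simpa using hB.dotProduct_mulVec_pos (hune j)
  set c : Fin (s+1) → ℝ := fun j => Real.sqrt (btil / Q j) with hc
  have hcpos : ∀ j, 0 < c j := fun j =>
    Real.sqrt_pos.mpr (div_pos hbtil (hQpos j))
  set pts : Fin (s+1) → EuclideanSpace ℝ (Fin s) :=
    fun j => b + (WithLp.equiv 2 (Fin s → ℝ)).symm (c j • u j) with hpts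
  have hdiff : ∀ j, (pts j - b : EuclideanSpace ℝ (Fin s))
      = (WithLp.equiv 2 (Fin s → ℝ)).symm (c j • u j) := by
    intro j; rw [hpts]; exact add_sub_cancel_left _ _
  -- the boundary condition
  have hbound : ∀ j, ((pts j - b : EuclideanSpace ℝ (Fin s))) ⬝ᵥ
      B.mulVec (pts j - b : EuclideanSpace ℝ (Fin s)) = btil := by
    intro j
    rw [hdiff j]
    show (c j • u j) ⬝ᵥ B *ᵥ (c j • u j) = btil
    have h1 : c j * c j = btil / Q j := Real.mul_self_sqrt (div_nonneg hbtil.le (hQpos j).le)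
    have h2 : (c j • u j) ⬝ᵥ B *ᵥ (c j • u j) = c j * c j * (u j ⬝ᵥ B *ᵥ u j) := by
      rw [Matrix.mulVec_smul, smul_dotProduct, dotProduct_smul]
      simp only [smul_eq_mul]; ring
    rw [h2, h1]
    exact div_mul_cancel₀ _ (hQpos j).ne'
  refine ⟨pts, hbound, ?_, ?_⟩
  · -- subset
    intro x hx j
    simp only [Set.mem_setOf_eq] at hx ⊢
    set y : Fin s → ℝ := (x - b : EuclideanSpace ℝ (Fin s)).ofLp with hy
    set p : Fin s → ℝ := (pts j - b : EuclideanSpace ℝ (Fin s)).ofLp with hp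
    have hpB : p ⬝ᵥ B *ᵥ p = btil := hbound j
    have hcs := cs hB y p (by rw [hpB]; exact hbtil)
    rw [hpB] at hcs
    have hy0 : 0 ≤ y ⬝ᵥ B *ᵥ y := posdot hB y
    nlinarith [hcs, hx, hbtil, hy0]
  · -- boundedness
    rw [isBounded_iff_forall_norm_le]
    have hdet : IsUnit B.det := hB.det_pos.ne'.isUnit
    set f : EuclideanSpace ℝ (Fin s) →L[ℝ] EuclideanSpace ℝ (Fin s) :=
      LinearMap.toContinuousLinearMap (Matrix.toEuclideanLin B⁻¹) with hf
    have hne : (Finset.univ : Finset (Fin (s+1))).Nonempty := Finset.univ_nonempty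
    set M : ℝ := Finset.univ.sup' hne (fun j => btil / c j) with hM
    have hMj : ∀ j, btil / c j ≤ M := fun j => by
      rw [hM]; exact Finset.le_sup' (fun j => btil / c j) (Finset.mem_univ j)
    have hMpos : 0 < M := lt_of_lt_of_le (div_pos hbtil (hcpos (0 : Fin (s+1)))) (hMj (0 : Fin (s+1)))
    set C : ℝ := ‖b‖ + ‖f‖ * Real.sqrt (s * (s * M)^2) with hC
    refine ⟨C, fun x hx => ?_⟩
    simp only [Set.mem_setOf_eq] at hx
    set y : Fin s → ℝ := (x - b : EuclideanSpace ℝ (Fin s)).ofLp with hy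
    set z : Fin s → ℝ := B *ᵥ y with hz
    -- constraints give bounds on z ⬝ᵥ u j
    have hzu : ∀ j, u j ⬝ᵥ z ≤ M := by
      intro j
      have h1 := hx j
      rw [hdiff j] at h1
      have h1' : y ⬝ᵥ B *ᵥ (c j • u j) ≤ btil := h1
      rw [Matrix.mulVec_smul, dotProduct_smul, smul_eq_mul] at h1'
      have h2 : y ⬝ᵥ B *ᵥ u j ≤ btil / c j := by
        rw [le_div_iff₀ (hcpos j)]; linarith [h1']
      calc u j ⬝ᵥ z = y ⬝ᵥ B *ᵥ u j := by
            rw [hz, Matrix.dotProduct_mulVec] at *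
            rw [← Matrix.dotProduct_mulVec]
            exact symdot hB (u j) y
        _ ≤ btil / c j := h2
        _ ≤ M := hMj j
    have hzle : ∀ i : Fin s, z i ≤ M := by
      intro i
      have hi : ((⟨(i : ℕ), lt_of_lt_of_le i.2 (Nat.le_succ s)⟩ : Fin (s+1)) : ℕ) < s := i.2
      have := hzu ⟨(i : ℕ), lt_of_lt_of_le i.2 (Nat.le_succ s)⟩
      rw [hu] at this
      simp only [dif_pos hi] at this
      rwa [single_dotProduct, one_mul] at this
    have hsum : -M ≤ ∑ i, z i := by
      have hlast : u (Fin.last s) = fun _ => (-1:ℝ) := by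
        rw [hu]; simp
      have := hzu (Fin.last s)
      rw [hlast] at this
      have h3 : (fun _ => (-1:ℝ)) ⬝ᵥ z = -∑ i, z i := by
        simp [dotProduct, Finset.sum_neg_distrib]
      rw [h3] at this
      linarith
    have hzabs : ∀ i : Fin s, |z i| ≤ s * M := by
      intro i
      rw [abs_le]
      constructor
      · have h4 : ∑ k ∈ Finset.univ.erase i, z k ≤ (s - 1) * M := by
          have h5 : ∑ k ∈ Finset.univ.erase i, z k ≤ (Finset.univ.erase i).card • M :=
            Finset.sum_le_card_nsmul _ _ _ (fun k _ => hzle k)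
          have h6 : (Finset.univ.erase i).card = s - 1 := by
            rw [Finset.card_erase_of_mem (Finset.mem_univ i)]
            simp
          rw [h6] at h5
          calc ∑ k ∈ Finset.univ.erase i, z k ≤ (s-1) • M := h5
            _ = ((s:ℝ) - 1) * M := by
                rw [nsmul_eq_mul]
                congr 1
                rw [Nat.cast_sub hs]
                norm_num
        have h7 : z i = (∑ k, z k) - ∑ k ∈ Finset.univ.erase i, z k := by
          rw [← Finset.add_sum_erase _ _ (Finset.mem_univ i)]
          ring
        have hs1 : (1:ℝ) ≤ s := by exact_mod_cast hs
        rw [h7]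
        nlinarith [hsum, h4, hMpos]
      · have hs1 : (1:ℝ) ≤ s := by exact_mod_cast hs
        nlinarith [hzle i, hMpos]
    -- norm bound on z
    have hznorm : ‖(WithLp.equiv 2 (Fin s → ℝ)).symm z‖ ≤ Real.sqrt (s * (s * M)^2) := by
      rw [EuclideanSpace.norm_eq]
      apply Real.sqrt_le_sqrt
      have h8 : ∀ i : Fin s, ‖((WithLp.equiv 2 (Fin s → ℝ)).symm z) i‖ ^ 2 ≤ (s * M)^2 := by
        intro i
        have : ((WithLp.equiv 2 (Fin s → ℝ)).symm z) i = z i := rfl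
        rw [this, Real.norm_eq_abs]
        calc |z i| ^ 2 ≤ (↑s * M) ^ 2 := pow_le_pow_left₀ (abs_nonneg _) (hzabs i) 2
          _ = (↑s * M)^2 := rfl
      calc ∑ i, ‖((WithLp.equiv 2 (Fin s → ℝ)).symm z) i‖ ^ 2
          ≤ ∑ _i : Fin s, (s * M)^2 := Finset.sum_le_sum (fun i _ => h8 i)
        _ = s * (s * M)^2 := by rw [Finset.sum_const]; simp [nsmul_eq_mul]
    -- recover x - b from z
    have hrec : f ((WithLp.equiv 2 (Fin s → ℝ)).symm z) = (x - b : EuclideanSpace ℝ (Fin s)) := by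
      rw [hf]
      simp only [LinearMap.coe_toContinuousLinearMap']
      rw [Matrix.toEuclideanLin_apply]
      have h9 : (WithLp.equiv 2 (Fin s → ℝ)) ((WithLp.equiv 2 (Fin s → ℝ)).symm z) = z := by
        simp
      rw [show ((WithLp.equiv 2 (Fin s → ℝ)).symm z).ofLp = z from h9, hz, Matrix.mulVec_mulVec, Matrix.nonsing_inv_mul _ hdet, Matrix.one_mulVec]
    have hxb : ‖(x - b : EuclideanSpace ℝ (Fin s))‖ ≤ ‖f‖ * Real.sqrt (s * (s * M)^2) := by
      rw [← hrec]
      calc ‖f ((WithLp.equiv 2 (Fin s → ℝ)).symm z)‖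
          ≤ ‖f‖ * ‖(WithLp.equiv 2 (Fin s → ℝ)).symm z‖ := f.le_opNorm _
        _ ≤ ‖f‖ * Real.sqrt (s * (s * M)^2) := by
            exact mul_le_mul_of_nonneg_left hznorm (norm_nonneg f)
    calc ‖x‖ = ‖b + (x - b)‖ := by rw [add_sub_cancel]
      _ ≤ ‖b‖ + ‖(x - b : EuclideanSpace ℝ (Fin s))‖ := norm_add_le _ _
      _ ≤ C := by rw [hC]; linarith [hxb]
end
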